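/- Let R be a ring, q a central unit of R, (σ, δ) a q-skew derivation on R, and N a two-sided ideal of R with σ(N) = N. Suppose n is a positive integer such that δ^n(x) = 0 for all x ∈ N^n, and such that {n!}_q is invertible in R. Then δ(s₁)·δ(s₂)···δ(s_n) ∈ N for all s₁, …, s_n ∈ N; that is, δ(N)^n ⊆ N. -/

import Mathlib

/-- The `n`-th power of an ideal with underlying set `S`: finite sums (and differences)
of `n`-fold products of elements of `S`. -/
def setProdPow {R : Type*} [Ring R] (S : Set R) (n : ℕ) : AddSubgroup R :=
  AddSubgroup.closure {x | ∃ l : List R, l.length = n ∧ (∀ y ∈ l, y ∈ S) ∧ x = l.prod}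

/-- `{n!}_q = ∏_{k=1}^{n} (1 + q + ⋯ + q^{k−1})`. -/
def qFactorial {R : Type*} [Ring R] (q : R) (n : ℕ) : R :=
  ((List.range n).map fun k => ∑ i ∈ Finset.range (k + 1), q ^ i).prod

/-- Auxiliary: "good" coefficients: killed by `δ`, fixed by `σ`, central. -/
def GoodCoef {R : Type*} [Ring R] (σ : R →+* R) (δ : R → R) (c : R) : Prop :=
  δ c = 0 ∧ σ c = c ∧ ∀ r : R, c * r = r * c

/-- Auxiliary: remainder terms in the q-Leibniz expansion of `δ^[j] (a*b)`:
terms where at least two derivatives land on `a`. -/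
def remSet {R : Type*} [Ring R] (σ : R →+* R) (δ : R → R) (j : ℕ) (a b : R) : Set R :=
  {x | ∃ k c, 2 ≤ k ∧ k ≤ j ∧ GoodCoef σ δ c ∧
    x = c * ((⇑σ)^[j - k] (δ^[k] a) * δ^[j - k] b)}

/-- Twisted product `σ^[m-1](δ a₁) ⋯ σ^[0](δ a_m)`. -/
def twp {R : Type*} [Ring R] (σ δ : R → R) : List R → R
  | [] => 1
  | a :: t => σ^[t.length] (δ a) * twp σ δ t

/-- Twisting a list by decreasing iterates of `τ`. -/
def twl {R : Type*} (τ : R → R) : List R → List R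
  | [] => []
  | a :: t => τ^[t.length] a :: twl τ t

/-- If `(σ, δ)` is a `q`-skew derivation, `N` a two-sided ideal with `σ(N) = N`,
`δ^n(N^n) = 0`, and `{n!}_q` invertible, then `δ(N)^n ⊆ N`. -/
theorem stmt_4 {R : Type*} [Ring R] (q : R) (hq : IsUnit q) (hqc : ∀ r : R, q * r = r * q)
    (σ : R →+* R) (hσ : Function.Bijective σ)
    (δ : R → R) (hδadd : ∀ a b : R, δ (a + b) = δ a + δ b)
    (hleib : ∀ a b : R, δ (a * b) = δ a * b + σ a * δ b)
    (hqskew : ∀ x : R, δ (σ x) = q * σ (δ x)) (hσq : σ q = q) (hδq : δ q = 0)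
    (N : TwoSidedIdeal R) (hN : (fun x : R => σ x) '' (N : Set R) = (N : Set R))
    (n : ℕ) (hn : 0 < n)
    (hnil : ∀ x ∈ setProdPow (N : Set R) n, δ^[n] x = 0)
    (hfac : IsUnit (qFactorial q n)) :
    ∀ l : List R, l.length = n → (∀ y ∈ l, y ∈ N) → (l.map δ).prod ∈ N := by
  -- basic facts about δ
  have hδ0 : δ 0 = 0 := by
    have h := hδadd 0 0
    rw [add_zero] at h
    exact (left_eq_add.mp h)
  have hδ1 : δ 1 = 0 := by
    have h := hleib 1 1
    rw [one_mul, mul_one, map_one, one_mul] at h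
    exact (left_eq_add.mp h)
  have hδneg : ∀ x : R, δ (-x) = -δ x := by
    intro x
    have h := hδadd x (-x)
    rw [add_neg_cancel, hδ0] at h
    exact eq_neg_of_add_eq_zero_right h.symm
  -- σ maps N into N
  have hσN : ∀ x, x ∈ N → σ x ∈ N := by
    intro x hx
    have : σ x ∈ ((fun x : R => σ x) '' (N : Set R)) := ⟨x, hx, rfl⟩
    rw [hN] at this
    exact this
  have hσitN : ∀ m, ∀ x, x ∈ N → (⇑σ)^[m] x ∈ N := by
    intro m
    induction m with
    | zero => intro x hx; simpa using hx
    | succ m ih =>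
      intro x hx
      rw [Function.iterate_succ_apply']
      exact hσN _ (ih x hx)
  -- σ-iterate facts
  have hσit_mul : ∀ m (x y : R), (⇑σ)^[m] (x * y) = (⇑σ)^[m] x * (⇑σ)^[m] y := by
    intro m
    induction m with
    | zero => intro x y; simp
    | succ m ih =>
      intro x y
      simp only [Function.iterate_succ_apply', ih, map_mul]
  have hσit_q : ∀ m, (⇑σ)^[m] q = q := by
    intro m
    induction m with
    | zero => rfl
    | succ m ih => rw [Function.iterate_succ_apply', ih, hσq]
  have hσit_qpow : ∀ m k, (⇑σ)^[m] (q ^ k) = q ^ k := by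
    intro m k
    induction k with
    | zero => simp [Function.iterate_fixed, map_one]
      -- σ^[m] 1 = 1
    | succ k ih => rw [pow_succ, hσit_mul, ih, hσit_q]
  have hδσ : ∀ m (x : R), δ ((⇑σ)^[m] x) = q ^ m * (⇑σ)^[m] (δ x) := by
    intro m
    induction m with
    | zero => intro x; simp
    | succ m ih =>
      intro x
      rw [Function.iterate_succ_apply', hqskew, ih, map_mul, map_pow, hσq,
        ← Function.iterate_succ_apply' σ]
      rw [← mul_assoc, ← pow_succ']
  -- Good coefficient facts
  have hg0 : GoodCoef σ δ 0 := ⟨hδ0, map_zero σ, fun r => by rw [zero_mul, mul_zero]⟩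
  have hg1 : GoodCoef σ δ 1 := ⟨hδ1, map_one σ, fun r => by rw [one_mul, mul_one]⟩
  have hgq : GoodCoef σ δ q := ⟨hδq, hσq, hqc⟩
  have hgadd : ∀ c d, GoodCoef σ δ c → GoodCoef σ δ d → GoodCoef σ δ (c + d) := by
    rintro c d ⟨h1, h2, h3⟩ ⟨g1, g2, g3⟩
    exact ⟨by rw [hδadd, h1, g1, add_zero], by rw [map_add, h2, g2],
      fun r => by rw [add_mul, mul_add, h3, g3]⟩
  have hgmul : ∀ c d, GoodCoef σ δ c → GoodCoef σ δ d → GoodCoef σ δ (c * d) := by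
    rintro c d ⟨h1, h2, h3⟩ ⟨g1, g2, g3⟩
    refine ⟨by rw [hleib, h1, g1, zero_mul, mul_zero, add_zero], by rw [map_mul, h2, g2],
      fun r => ?_⟩
    rw [mul_assoc, g3, ← mul_assoc, h3, mul_assoc]
  have hgpow : ∀ k, GoodCoef σ δ (q ^ k) := by
    intro k
    induction k with
    | zero => simpa using hg1
    | succ k ih => rw [pow_succ]; exact hgmul _ _ ih hgq
  have hge : ∀ m, GoodCoef σ δ (∑ i ∈ Finset.range m, q ^ i) := by
    intro m
    induction m with
    | zero => simpa using hg0
    | succ m ih => rw [Finset.sum_range_succ]; exact hgadd _ _ ih (hgpow m)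
  have hfac0 : qFactorial q 0 = 1 := by simp [qFactorial]
  have hfacsucc : ∀ m, qFactorial q (m + 1)
      = qFactorial q m * ∑ i ∈ Finset.range (m + 1), q ^ i := by
    intro m
    simp [qFactorial, List.range_succ]
  have hgfac : ∀ m, GoodCoef σ δ (qFactorial q m) := by
    intro m
    induction m with
    | zero => rw [hfac0]; exact hg1
    | succ m ih => rw [hfacsucc]; exact hgmul _ _ ih (hge _)
  have hgoodmul : ∀ c x, GoodCoef σ δ c → δ (c * x) = c * δ x := by
    rintro c x ⟨h1, h2, _⟩
    rw [hleib, h1, h2, zero_mul, zero_add]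
  -- δ maps remainder closures forward
  have hremδ : ∀ j (a b : R), 1 ≤ j → ∀ r ∈ AddSubgroup.closure (remSet σ δ j a b),
      δ r ∈ AddSubgroup.closure (remSet σ δ (j + 1) a b) := by
    intro j a b hj r hr
    induction hr using AddSubgroup.closure_induction with
    | mem x hx =>
      obtain ⟨k, c, hk2, hkj, hc, rfl⟩ := hx
      rw [hgoodmul _ _ hc, hleib, hδσ, ← Function.iterate_succ_apply' δ k a,
        ← Function.iterate_succ_apply' σ, ← Function.iterate_succ_apply' δ]
      rw [mul_add]
      refine AddSubgroup.add_mem _ (AddSubgroup.subset_closure ?_)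
        (AddSubgroup.subset_closure ?_)
      · refine ⟨k + 1, c * q ^ (j - k), by omega, by omega, hgmul _ _ hc (hgpow _), ?_⟩
        rw [show j + 1 - (k + 1) = j - k from by omega]
        noncomm_ring
      · refine ⟨k, c, hk2, by omega, hc, ?_⟩
        rw [show j + 1 - k = (j - k) + 1 from by omega]
    | zero => rw [hδ0]; exact AddSubgroup.zero_mem _
    | add x y hx hy ihx ihy => rw [hδadd]; exact AddSubgroup.add_mem _ ihx ihy
    | neg x hx ihx => rw [hδneg]; exact AddSubgroup.neg_mem _ ihx
  -- the key q-Leibniz expansion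
  have hL : ∀ j, 1 ≤ j → ∀ a b : R, ∃ r ∈ AddSubgroup.closure (remSet σ δ j a b),
      δ^[j] (a * b) = (⇑σ)^[j] a * δ^[j] b
        + (∑ i ∈ Finset.range j, q ^ i) * ((⇑σ)^[j - 1] (δ a) * δ^[j - 1] b) + r := by
    intro j hj
    induction j, hj using Nat.le_induction with
    | base =>
      intro a b
      refine ⟨0, AddSubgroup.zero_mem _, ?_⟩
      simp [hleib a b]
      abel
    | succ j hj ih =>
      intro a b
      obtain ⟨r, hr, heq⟩ := ih a b
      have hj1 : j - 1 + 1 = j := by omega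
      refine ⟨(∑ i ∈ Finset.range j, q ^ i) * (q ^ (j - 1) *
          ((⇑σ)^[j - 1] (δ^[2] a) * δ^[j - 1] b)) + δ r, ?_, ?_⟩
      · refine AddSubgroup.add_mem _ (AddSubgroup.subset_closure ?_) (hremδ j a b hj r hr)
        refine ⟨2, (∑ i ∈ Finset.range j, q ^ i) * q ^ (j - 1), le_refl 2, by omega,
          hgmul _ _ (hge _) (hgpow _), ?_⟩
        have e2 : (j + 1) - 2 = j - 1 := by omega
        rw [e2, mul_assoc]
      · have h2a : δ (δ a) = δ^[2] a := by
          rw [show (2:ℕ) = 1 + 1 from rfl, Function.iterate_succ_apply', Function.iterate_one]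
        rw [Function.iterate_succ_apply' δ j, heq, hδadd, hδadd]
        rw [hleib ((⇑σ)^[j] a) (δ^[j] b), hδσ, ← Function.iterate_succ_apply' σ,
          ← Function.iterate_succ_apply' δ]
        rw [hgoodmul _ _ (hge j), hleib ((⇑σ)^[j - 1] (δ a)) (δ^[j - 1] b), hδσ, h2a,
          ← Function.iterate_succ_apply' σ, ← Function.iterate_succ_apply' δ]
        simp only [Nat.succ_eq_add_one, hj1]
        rw [Finset.sum_range_succ]
        rw [show (j + 1) - 1 = j from by omega]
        noncomm_ring
  -- remainder closures land in N when the b-derivatives do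
  have hclosN : ∀ j (a b : R), (∀ k, 2 ≤ k → k ≤ j → δ^[j - k] b ∈ N) →
      ∀ r ∈ AddSubgroup.closure (remSet σ δ j a b), r ∈ N := by
    intro j a b hb r hr
    induction hr using AddSubgroup.closure_induction with
    | mem x hx =>
      obtain ⟨k, c, hk2, hkj, hc, rfl⟩ := hx
      exact N.mul_mem_left _ _ (N.mul_mem_left _ _ (hb k hk2 hkj))
    | zero => exact N.zero_mem
    | add x y _ _ ihx ihy => exact N.add_mem ihx ihy
    | neg x _ ihx => exact N.neg_mem ihx
  -- Lemma A : fewer derivatives than factors lands in N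
  have hA : ∀ l : List R, (∀ y ∈ l, y ∈ N) → ∀ j, j < l.length → δ^[j] l.prod ∈ N := by
    intro l
    induction l with
    | nil => intro _ j hj; simp at hj
    | cons a t ih =>
      intro hmem j hj
      have ha : a ∈ N := hmem a List.mem_cons_self
      have hmt : ∀ y ∈ t, y ∈ N := fun y hy => hmem y (List.mem_cons_of_mem a hy)
      have hlen : j ≤ t.length := by
        simp only [List.length_cons] at hj; omega
      rw [List.prod_cons]
      rcases Nat.eq_zero_or_pos j with h0 | hpos
      · subst h0
        simpa using N.mul_mem_right a t.prod ha
      · obtain ⟨r, hr, heq⟩ := hL j hpos a t.prod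
        rw [heq]
        refine N.add_mem (N.add_mem ?_ ?_) ?_
        · exact N.mul_mem_right _ _ (hσitN j a ha)
        · exact N.mul_mem_left _ _ (N.mul_mem_left _ _ (ih hmt (j - 1) (by omega)))
        · exact hclosN j a t.prod (fun k hk2 hkj => ih hmt (j - k) (by omega)) r hr
  -- Lemma B : the leading term of δ^[length] of a product
  have hB : ∀ l : List R, (∀ y ∈ l, y ∈ N) →
      ∃ ν ∈ N, δ^[l.length] l.prod = qFactorial q l.length * twp (⇑σ) δ l + ν := by
    intro l
    induction l with
    | nil => exact fun _ => ⟨0, N.zero_mem, by simp [twp, hfac0]⟩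
    | cons a t ih =>
      intro hmem
      have ha : a ∈ N := hmem a List.mem_cons_self
      have hmt : ∀ y ∈ t, y ∈ N := fun y hy => hmem y (List.mem_cons_of_mem a hy)
      obtain ⟨ν₀, hν₀, ht⟩ := ih hmt
      obtain ⟨r, hr, heq⟩ := hL (t.length + 1) (by omega) a t.prod
      have hrN : r ∈ N :=
        hclosN _ a t.prod (fun k hk2 hkj => hA t hmt (t.length + 1 - k) (by omega)) r hr
      refine ⟨(⇑σ)^[t.length + 1] a * δ^[t.length + 1] t.prod
          + (∑ i ∈ Finset.range (t.length + 1), q ^ i) * ((⇑σ)^[t.length] (δ a) * ν₀) + r,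
        N.add_mem (N.add_mem (N.mul_mem_right _ _ (hσitN _ a ha))
          (N.mul_mem_left _ _ (N.mul_mem_left _ _ hν₀))) hrN, ?_⟩
      rw [List.length_cons, List.prod_cons, heq]
      rw [show t.length + 1 - 1 = t.length from by omega, ht]
      have hcomm : (⇑σ)^[t.length] (δ a) * (qFactorial q t.length * twp ⇑σ δ t)
          = qFactorial q t.length * ((⇑σ)^[t.length] (δ a) * twp ⇑σ δ t) := by
        rw [← mul_assoc, ← (hgfac t.length).2.2, mul_assoc]
      rw [show twp ⇑σ δ (a :: t) = (⇑σ)^[t.length] (δ a) * twp ⇑σ δ t from rfl]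
      rw [hfacsucc t.length]
      rw [mul_add ((⇑σ)^[t.length] (δ a)), hcomm,
        mul_add (∑ i ∈ Finset.range (t.length + 1), q ^ i),
        ← mul_assoc (∑ i ∈ Finset.range (t.length + 1), q ^ i),
        (hge (t.length + 1)).2.2 (qFactorial q t.length)]
      abel
  -- the inverse of σ
  let eqv : R ≃+* R := RingEquiv.ofBijective σ hσ
  set τ : R → R := ⇑eqv.symm with hτ
  have hστ : ∀ x : R, σ (τ x) = x := fun x => eqv.apply_symm_apply x
  have hτσ : ∀ x : R, τ (σ x) = x := fun x => eqv.symm_apply_apply x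
  have hτN : ∀ x, x ∈ N → τ x ∈ N := by
    intro x hx
    have hx' : x ∈ (fun x : R => σ x) '' (N : Set R) := by rw [hN]; exact hx
    obtain ⟨y, hy, rfl⟩ := hx'
    rw [hτσ]
    exact hy
  have hτitN : ∀ m, ∀ x, x ∈ N → τ^[m] x ∈ N := by
    intro m
    induction m with
    | zero => intro x hx; simpa using hx
    | succ m ihm =>
      intro x hx
      rw [Function.iterate_succ_apply']
      exact hτN _ (ihm x hx)
  have hσit_qmul : ∀ m (x : R), (⇑σ)^[m] (q * x) = q * (⇑σ)^[m] x := by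
    intro m
    induction m with
    | zero => intro x; simp
    | succ m ihm =>
      intro x
      simp only [Function.iterate_succ_apply', ihm, map_mul, hσq]
  have hkey1 : ∀ z : R, q * σ (δ (τ z)) = δ z := by
    intro z
    rw [← hqskew (τ z), hστ]
  have hkey : ∀ k (z : R), q ^ k * (⇑σ)^[k] (δ (τ^[k] z)) = δ z := by
    intro k
    induction k with
    | zero => intro z; simp
    | succ k ihk =>
      intro z
      rw [Function.iterate_succ_apply' τ k z, Function.iterate_succ_apply (⇑σ) k,
        pow_succ, mul_assoc, ← hσit_qmul, hkey1]
      exact ihk z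
  -- lengths and membership of twisted lists
  have htwl_len : ∀ l : List R, (twl τ l).length = l.length := by
    intro l
    induction l with
    | nil => rfl
    | cons a t iht => rw [show twl τ (a :: t) = τ^[t.length] a :: twl τ t from rfl,
        List.length_cons, List.length_cons, iht]
  have htwl_mem : ∀ l : List R, (∀ y ∈ l, y ∈ N) → ∀ y ∈ twl τ l, y ∈ N := by
    intro l
    induction l with
    | nil => intro _ y hy; simp [twl] at hy
    | cons a t iht =>
      intro hmem y hy
      rw [show twl τ (a :: t) = τ^[t.length] a :: twl τ t from rfl] at hy
      rcases List.mem_cons.mp hy with h | h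
      · subst h; exact hτitN _ a (hmem a List.mem_cons_self)
      · exact iht (fun z hz => hmem z (List.mem_cons_of_mem a hz)) y h
  have htw : ∀ l : List R, ∃ K : ℕ, q ^ K * twp (⇑σ) δ (twl τ l) = (l.map δ).prod := by
    intro l
    induction l with
    | nil => exact ⟨0, by simp [twl, twp]⟩
    | cons a t iht =>
      obtain ⟨K, hK⟩ := iht
      refine ⟨t.length + K, ?_⟩
      rw [show twl τ (a :: t) = τ^[t.length] a :: twl τ t from rfl]
      rw [show twp ⇑σ δ (τ^[t.length] a :: twl τ t)
        = (⇑σ)^[(twl τ t).length] (δ (τ^[t.length] a)) * twp ⇑σ δ (twl τ t) from rfl]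
      rw [htwl_len t, List.map_cons, List.prod_cons, ← hK, ← hkey t.length a]
      rw [pow_add, mul_assoc, ← mul_assoc (q ^ K), (hgpow K).2.2]
      noncomm_ring
  -- final assembly
  intro l hlen hmem
  obtain ⟨K, hK⟩ := htw l
  have hmem' := htwl_mem l hmem
  have hlen' : (twl τ l).length = n := by rw [htwl_len, hlen]
  have h0 : δ^[n] (twl τ l).prod = 0 :=
    hnil _ (AddSubgroup.subset_closure ⟨twl τ l, hlen', hmem', rfl⟩)
  obtain ⟨ν, hν, heq⟩ := hB (twl τ l) hmem'
  rw [hlen'] at heq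
  have hFT : qFactorial q n * twp (⇑σ) δ (twl τ l) = -ν :=
    eq_neg_of_add_eq_zero_left (heq.symm.trans h0)
  have hTN : twp (⇑σ) δ (twl τ l) ∈ N := by
    have h1 : qFactorial q n * twp ⇑σ δ (twl τ l) ∈ N := hFT ▸ N.neg_mem hν
    obtain ⟨u, hu⟩ := hfac
    have h2 := N.mul_mem_left (↑u⁻¹) _ h1
    rwa [← hu, Units.inv_mul_cancel_left] at h2
  rw [← hK]
  exact N.mul_mem_left _ _ hTN
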